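/- Suppose {ν_k}_{k=0}^p are real frequencies satisfying min_{k≠k'} |ν_k - ν_{k'}| ≥ g/T with g ≥ 4, and let W(ν) = 1/(2π·|Tν|·((Tν)² - 1)) for |Tν| > 1. Then for every ν in (ν_k - 2/T, ν_k + 2/T), Σ_{l ≠ k} W(ν - ν_l) ≤ Σ_{m=1}^∞ 2·W((mg - 2)/T) ≤ (16 log 2)/(π g³) < 4/g³. -/
import Mathlib


open Finset

/-- The envelope `W(ν) = 1/(2π·|Tν|·((Tν)² - 1))` for the Hann spectrum tails. -/
noncomputable def hannEnvelope (T ν : ℝ) : ℝ :=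
  1 / (2 * Real.pi * |T * ν| * ((T * ν) ^ 2 - 1))

open Filter Topology
lemma harm_cast_succ (n : ℕ) : ((harmonic (n+1) : ℝ)) = (harmonic n : ℝ) + 1/((n:ℝ)+1) := by
  push_cast [harmonic_succ]
  ring

lemma hannEnvelope_div {T : ℝ} (hT : T ≠ 0) (x : ℝ) :
    hannEnvelope T (x / T) = 1 / (2 * Real.pi * |x| * (x ^ 2 - 1)) := by
  have h : T * (x / T) = x := by field_simp
  rw [hannEnvelope, h]

lemma hannEnvelope_le {T : ℝ} {a u : ℝ} (ha : 2 ≤ a) (hu : a ≤ |T * u|) :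
    hannEnvelope T u ≤ 1 / (2 * Real.pi * a * (a ^ 2 - 1)) := by
  have hπ := Real.pi_pos
  have ha0 : (0:ℝ) < a := by linarith
  have ha1 : (0:ℝ) < a ^ 2 - 1 := by nlinarith
  have hpos : (0:ℝ) < 2 * Real.pi * a * (a ^ 2 - 1) :=
    mul_pos (mul_pos (by positivity) ha0) ha1
  unfold hannEnvelope
  apply one_div_le_one_div_of_le hpos
  have hsq : (T * u) ^ 2 = |T * u| ^ 2 := (sq_abs _).symm
  rw [hsq]
  have hq : (0:ℝ) ≤ |T*u|^2 + a*|T*u| + a^2 - 1 := by nlinarith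
  nlinarith [mul_nonneg hπ.le (mul_nonneg (sub_nonneg.2 hu) hq)]

lemma hannEnvelope_nonneg {T u : ℝ} (h : 2 ≤ |T * u|) : 0 ≤ hannEnvelope T u := by
  have hπ := Real.pi_pos
  have hsq : (T * u) ^ 2 = |T * u| ^ 2 := (sq_abs _).symm
  have h1 : (0:ℝ) ≤ |T * u| := abs_nonneg _
  have h2 : (0:ℝ) ≤ (T * u) ^ 2 - 1 := by nlinarith
  exact div_nonneg zero_le_one (mul_nonneg (mul_nonneg (by positivity) h1) h2)

lemma quad_partial_sum (N : ℕ) :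
    ∑ m ∈ Finset.range N, (1:ℝ)/((4*(m:ℝ)+1)*(4*(m:ℝ)+2)*(4*(m:ℝ)+3))
      = (1/2) * ((harmonic (4*N) : ℝ) - (3/2) * (harmonic (2*N) : ℝ) + (1/2) * (harmonic N : ℝ)) := by
  induction N with
  | zero => simp
  | succ n ih =>
    rw [Finset.sum_range_succ, ih]
    have e4 : 4*(n+1) = ((4*n)+1)+1+1+1 := by ring
    have e2 : 2*(n+1) = ((2*n)+1)+1 := by ring
    rw [e4, e2, harm_cast_succ, harm_cast_succ, harm_cast_succ, harm_cast_succ,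
      harm_cast_succ, harm_cast_succ, harm_cast_succ]
    push_cast
    have h1 : (4*(n:ℝ)+1) ≠ 0 := by positivity
    have h2 : (4*(n:ℝ)+2) ≠ 0 := by positivity
    have h3 : (4*(n:ℝ)+3) ≠ 0 := by positivity
    have h4 : (4*(n:ℝ)+4) ≠ 0 := by positivity
    have h5 : (2*(n:ℝ)+1) ≠ 0 := by positivity
    have h6 : (2*(n:ℝ)+2) ≠ 0 := by positivity
    have h7 : ((n:ℝ)+1) ≠ 0 := by positivity
    field_simp
    ring

lemma summable_quad : Summable (fun m : ℕ => (1:ℝ)/((4*(m:ℝ)+1)*(4*(m:ℝ)+2)*(4*(m:ℝ)+3))) := by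
  have hs : Summable (fun n : ℕ => 1/((n:ℝ)+1)^2) := by
    have := (summable_nat_add_iff (f := fun n : ℕ => 1/((n:ℝ))^2) 1).2
      ((Real.summable_one_div_nat_pow (p := 2)).2 one_lt_two)
    simpa using this
  refine Summable.of_nonneg_of_le (fun m => by positivity) (fun m => ?_) hs
  apply one_div_le_one_div_of_le (by positivity)
  have : (0:ℝ) ≤ (m:ℝ) := Nat.cast_nonneg m
  nlinarith [mul_nonneg (mul_nonneg this this) this, mul_nonneg this this]

lemma hasSum_quad :
    HasSum (fun m : ℕ => (1:ℝ)/((4*(m:ℝ)+1)*(4*(m:ℝ)+2)*(4*(m:ℝ)+3))) (Real.log 2 / 4) := by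
  rw [summable_quad.hasSum_iff_tendsto_nat]
  set f : ℕ → ℝ := fun n => (harmonic n : ℝ) - Real.log n with hf
  have hγ : Tendsto f atTop (𝓝 Real.eulerMascheroniConstant) := Real.tendsto_harmonic_sub_log
  have t4 : Tendsto (fun N : ℕ => 4*N) atTop atTop :=
    StrictMono.tendsto_atTop (fun a b h => by omega)
  have t2 : Tendsto (fun N : ℕ => 2*N) atTop atTop :=
    StrictMono.tendsto_atTop (fun a b h => by omega)
  have h4 : Tendsto (fun N : ℕ => f (4*N)) atTop (𝓝 Real.eulerMascheroniConstant) := hγ.comp t4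
  have h2 : Tendsto (fun N : ℕ => f (2*N)) atTop (𝓝 Real.eulerMascheroniConstant) := hγ.comp t2
  have H : Tendsto (fun N : ℕ =>
      (1/2)*(f (4*N) - (3/2)*f (2*N) + (1/2)*(f N)) + Real.log 2/4) atTop
      (𝓝 ((1/2)*(Real.eulerMascheroniConstant - (3/2)*Real.eulerMascheroniConstant
        + (1/2)*Real.eulerMascheroniConstant) + Real.log 2/4)) :=
    (((h4.sub (h2.const_mul (3/2))).add (hγ.const_mul (1/2))).const_mul (1/2)).add_const _
  have hval : (1/2)*(Real.eulerMascheroniConstant - (3/2)*Real.eulerMascheroniConstant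
        + (1/2)*Real.eulerMascheroniConstant) + Real.log 2/4 = Real.log 2/4 := by ring
  rw [hval] at H
  apply H.congr'
  filter_upwards [eventually_ge_atTop 1] with N hN
  have hN0 : ((N:ℝ)) ≠ 0 := by
    have : (0:ℕ) < N := hN
    exact_mod_cast this.ne'
  rw [quad_partial_sum]
  have l4 : Real.log ((4*N : ℕ):ℝ) = 2*Real.log 2 + Real.log N := by
    push_cast
    rw [show (4:ℝ)*(N:ℝ) = 2^2*(N:ℝ) by ring, Real.log_mul (by positivity) hN0, Real.log_pow]
    push_cast; ring
  have l2 : Real.log ((2*N : ℕ):ℝ) = Real.log 2 + Real.log N := by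
    push_cast
    rw [Real.log_mul two_ne_zero hN0]
  simp only [hf]
  rw [l4, l2]
  ring

/-- Leakage tail bound: if the frequencies are pairwise separated by at least `g/T`
with `g ≥ 4`, then for any `ν` within `2/T` of `ν_k`,
`Σ_{l≠k} W(ν - ν_l) ≤ Σ_{m≥1} 2 W((mg-2)/T) ≤ (16 log 2)/(π g³) < 4/g³`. -/
theorem hann_leakage_tail_bound (T g : ℝ) (hT : 0 < T) (hg : 4 ≤ g) (p : ℕ)
    (νf : Fin (p + 1) → ℝ)
    (hsep : ∀ k k' : Fin (p + 1), k ≠ k' → g / T ≤ |νf k - νf k'|)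
    (k : Fin (p + 1)) (ν : ℝ) (hν : ν ∈ Set.Ioo (νf k - 2 / T) (νf k + 2 / T)) :
    (∑ l ∈ Finset.univ.erase k, hannEnvelope T (ν - νf l)) ≤
        (∑' m : ℕ, 2 * hannEnvelope T ((((m : ℝ) + 1) * g - 2) / T)) ∧
    (∑' m : ℕ, 2 * hannEnvelope T ((((m : ℝ) + 1) * g - 2) / T)) ≤
        16 * Real.log 2 / (Real.pi * g ^ 3) ∧
    16 * Real.log 2 / (Real.pi * g ^ 3) < 4 / g ^ 3 := by
  have hπ := Real.pi_pos
  have hg0 : (0:ℝ) < g := by linarith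
  -- basic facts about A m := (m+1)g - 2
  have hA2 : ∀ m : ℕ, 2 ≤ ((m:ℝ)+1)*g - 2 := by
    intro m
    have : (0:ℝ) ≤ (m:ℝ) := Nat.cast_nonneg m
    nlinarith
  -- termwise bound for part 2
  have key2 : ∀ m : ℕ, 2 * hannEnvelope T ((((m : ℝ) + 1) * g - 2) / T)
      ≤ (64/(Real.pi*g^3)) * ((1:ℝ)/((4*(m:ℝ)+1)*(4*(m:ℝ)+2)*(4*(m:ℝ)+3))) := by
    intro m
    have hm0 : (0:ℝ) ≤ (m:ℝ) := Nat.cast_nonneg m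
    have h2A := hA2 m
    set A : ℝ := ((m:ℝ)+1)*g - 2 with hAdef
    rw [hannEnvelope_div hT.ne', abs_of_pos (by linarith : (0:ℝ) < A)]
    have e2 : 2 * (1/(2*Real.pi*A*(A^2-1))) = 1/(Real.pi*((A-1)*A*(A+1))) := by
      rw [show 2*Real.pi*A*(A^2-1) = 2*(Real.pi*((A-1)*A*(A+1))) by ring]
      rw [one_div, one_div, mul_inv, ← mul_assoc]
      norm_num
    have e1 : (64/(Real.pi*g^3)) * ((1:ℝ)/((4*(m:ℝ)+1)*(4*(m:ℝ)+2)*(4*(m:ℝ)+3)))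
        = 1/(Real.pi*((g/4*(4*(m:ℝ)+1))*(g/4*(4*(m:ℝ)+2))*(g/4*(4*(m:ℝ)+3)))) := by
      have n1 : (4*(m:ℝ)+1) ≠ 0 := by positivity
      have n2 : (4*(m:ℝ)+2) ≠ 0 := by positivity
      have n3 : (4*(m:ℝ)+3) ≠ 0 := by positivity
      have nπ : Real.pi ≠ 0 := hπ.ne'
      have ng : g ≠ 0 := hg0.ne'
      field_simp
      ring
    rw [e2, e1]
    apply one_div_le_one_div_of_le (by positivity)
    have f1 : g/4*(4*(m:ℝ)+1) ≤ A - 1 := by rw [hAdef]; nlinarith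
    have f2 : g/4*(4*(m:ℝ)+2) ≤ A := by rw [hAdef]; nlinarith
    have f3 : g/4*(4*(m:ℝ)+3) ≤ A + 1 := by rw [hAdef]; nlinarith
    have p1 : (0:ℝ) < g/4*(4*(m:ℝ)+1) := by positivity
    have p2 : (0:ℝ) < g/4*(4*(m:ℝ)+2) := by positivity
    have p3 : (0:ℝ) < g/4*(4*(m:ℝ)+3) := by positivity
    have hprod : (g/4*(4*(m:ℝ)+1))*(g/4*(4*(m:ℝ)+2))*(g/4*(4*(m:ℝ)+3))
        ≤ (A-1)*A*(A+1) :=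
      mul_le_mul (mul_le_mul f1 f2 p2.le (by linarith)) f3 p3.le
        (mul_nonneg (by linarith) (by linarith))
    exact mul_le_mul_of_nonneg_left hprod hπ.le
  -- the comparison series
  have hRs : HasSum (fun m : ℕ => (64/(Real.pi*g^3)) *
      ((1:ℝ)/((4*(m:ℝ)+1)*(4*(m:ℝ)+2)*(4*(m:ℝ)+3)))) (16*Real.log 2/(Real.pi*g^3)) := by
    have h := hasSum_quad.mul_left (64/(Real.pi*g^3))
    have : (64/(Real.pi*g^3)) * (Real.log 2 / 4) = 16*Real.log 2/(Real.pi*g^3) := by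
      field_simp; ring
    rwa [this] at h
  have habs : ∀ m : ℕ, |T * (((((m:ℝ)+1)*g - 2) / T))| = ((m:ℝ)+1)*g - 2 := by
    intro m
    have h : T * ((((m:ℝ)+1)*g - 2) / T) = ((m:ℝ)+1)*g - 2 := by field_simp
    rw [h, abs_of_pos (by linarith [hA2 m])]
  have hnn : ∀ m : ℕ, 0 ≤ 2 * hannEnvelope T ((((m : ℝ) + 1) * g - 2) / T) := by
    intro m
    have := hannEnvelope_nonneg (T := T) (u := ((((m:ℝ)+1)*g - 2) / T)) (by rw [habs m]; exact hA2 m)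
    linarith
  have hsum2 : Summable (fun m : ℕ => 2 * hannEnvelope T ((((m : ℝ) + 1) * g - 2) / T)) :=
    Summable.of_nonneg_of_le hnn key2 hRs.summable
  have part2 : (∑' m : ℕ, 2 * hannEnvelope T ((((m : ℝ) + 1) * g - 2) / T)) ≤
      16 * Real.log 2 / (Real.pi * g ^ 3) := by
    calc (∑' m : ℕ, 2 * hannEnvelope T ((((m : ℝ) + 1) * g - 2) / T))
        ≤ ∑' m : ℕ, (64/(Real.pi*g^3)) * ((1:ℝ)/((4*(m:ℝ)+1)*(4*(m:ℝ)+2)*(4*(m:ℝ)+3))) :=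
          Summable.tsum_le_tsum key2 hsum2 hRs.summable
      _ = 16 * Real.log 2 / (Real.pi * g ^ 3) := hRs.tsum_eq
  refine ⟨?_, part2, ?_⟩
  · -- Part 1
    obtain ⟨hν1, hν2⟩ := hν
    have hνk : |ν - νf k| < 2 / T := abs_lt.2 ⟨by linarith, by linarith⟩
    have hnn' : ∀ m : ℕ, 0 ≤ hannEnvelope T ((((m : ℝ) + 1) * g - 2) / T) := by
      intro m; linarith [hnn m]
    set s : Finset (Fin (p+1)) := Finset.univ.erase k with hs
    set M : Fin (p+1) → ℕ := fun l => ⌊|νf l - νf k| * T / g⌋₊ with hMdef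
    have hdist : ∀ l ∈ s, g / T ≤ |νf l - νf k| := fun l hl =>
      hsep l k (Finset.ne_of_mem_erase hl)
    have hM1 : ∀ l ∈ s, 1 ≤ M l := by
      intro l hl
      apply Nat.le_floor
      rw [Nat.cast_one, le_div_iff₀ hg0, one_mul]
      calc g = (g/T) * T := by field_simp
        _ ≤ |νf l - νf k| * T := mul_le_mul_of_nonneg_right (hdist l hl) hT.le
    have hMd : ∀ l, (M l : ℝ) * g ≤ |νf l - νf k| * T := by
      intro l
      have h0 : 0 ≤ |νf l - νf k| * T / g := by positivity
      exact (le_div_iff₀ hg0).1 (Nat.floor_le h0)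
    -- termwise bound
    have hterm : ∀ l ∈ s, hannEnvelope T (ν - νf l)
        ≤ hannEnvelope T (((((M l - 1 : ℕ):ℝ) + 1) * g - 2) / T) := by
      intro l hl
      have h1 := hM1 l hl
      have hcast : ((M l - 1 : ℕ):ℝ) + 1 = (M l : ℝ) := by
        rw [Nat.cast_sub h1, Nat.cast_one]; ring
      have hMl1 : (1:ℝ) ≤ (M l : ℝ) := by exact_mod_cast h1
      have hA : (2:ℝ) ≤ (M l : ℝ) * g - 2 := by nlinarith
      rw [hannEnvelope_div hT.ne', hcast,
        abs_of_pos (by linarith : (0:ℝ) < (M l:ℝ)*g - 2)]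
      apply hannEnvelope_le hA
      rw [abs_mul, abs_of_pos hT]
      have h3 := abs_sub_le (νf l) ν (νf k)
      rw [abs_sub_comm (νf l) ν] at h3
      have hd := hMd l
      have h4 : (M l : ℝ)*g/T - 2/T ≤ |ν - νf l| := by
        have h5 : (M l : ℝ)*g/T ≤ |νf l - νf k| := by
          rw [div_le_iff₀ hT]; exact hd
        linarith
      calc (M l:ℝ)*g - 2 = T * ((M l:ℝ)*g/T - 2/T) := by field_simp
        _ ≤ T * |ν - νf l| := mul_le_mul_of_nonneg_left h4 hT.le
    -- injectivity of l ↦ (M l - 1, side)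
    have hφinj : ∀ l ∈ s, ∀ l' ∈ s,
        (M l - 1, decide (νf k < νf l)) = (M l' - 1, decide (νf k < νf l')) → l = l' := by
      intro l hl l' hl' heq
      by_contra hne
      rw [Prod.mk.injEq] at heq
      obtain ⟨hMe, hside⟩ := heq
      have hMeq : M l = M l' := by
        have := hM1 l hl; have := hM1 l' hl'; omega
      have hsd : (νf k < νf l ↔ νf k < νf l') := by
        simpa [decide_eq_decide] using hside
      have hgT : (0:ℝ) < g / T := div_pos hg0 hT
      have hll' : g / T ≤ |νf l - νf l'| := hsep l l' hne
      have hne_l : νf l ≠ νf k := by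
        intro h
        have := hdist l hl; rw [h, sub_self, abs_zero] at this; linarith
      have hne_l' : νf l' ≠ νf k := by
        intro h
        have := hdist l' hl'; rw [h, sub_self, abs_zero] at this; linarith
      have hgap : g / T ≤ abs (|νf l - νf k| - |νf l' - νf k|) := by
        by_cases hc : νf k < νf l
        · have hc' : νf k < νf l' := hsd.1 hc
          rw [abs_of_pos (sub_pos.2 hc), abs_of_pos (sub_pos.2 hc'),
            show (νf l - νf k) - (νf l' - νf k) = νf l - νf l' by ring]
          exact hll'
        · have hcl : νf l < νf k := lt_of_le_of_ne (not_lt.1 hc) hne_l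
          have hcl' : νf l' < νf k := lt_of_le_of_ne (not_lt.1 (fun h => hc (hsd.2 h))) hne_l'
          rw [abs_of_neg (sub_neg.2 hcl), abs_of_neg (sub_neg.2 hcl'),
            show -(νf l - νf k) - -(νf l' - νf k) = νf l' - νf l by ring, abs_sub_comm]
          exact hll'
      set x : ℝ := |νf l - νf k| * T / g with hx
      set y : ℝ := |νf l' - νf k| * T / g with hy
      have hx0 : 0 ≤ x := by positivity
      have hy0 : 0 ≤ y := by positivity
      have hxy : 1 ≤ |x - y| := by
        have e : x - y = (|νf l - νf k| - |νf l' - νf k|) * (T/g) := by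
          rw [hx, hy]; ring
        rw [e, abs_mul, abs_of_pos (div_pos hT hg0)]
        calc (1:ℝ) = (g/T) * (T/g) := by field_simp
          _ ≤ abs (|νf l - νf k| - |νf l' - νf k|) * (T/g) :=
            mul_le_mul_of_nonneg_right hgap (div_pos hT hg0).le
      have hfx : (M l : ℝ) ≤ x := Nat.floor_le hx0
      have hfy : (M l' : ℝ) ≤ y := Nat.floor_le hy0
      have hlx : x < (M l : ℝ) + 1 := Nat.lt_floor_add_one x
      have hly : y < (M l' : ℝ) + 1 := Nat.lt_floor_add_one y
      have hMc : ((M l : ℕ) : ℝ) = ((M l' : ℕ) : ℝ) := by exact_mod_cast hMeq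
      have : |x - y| < 1 := abs_lt.2 ⟨by linarith, by linarith⟩
      linarith
    -- assemble
    have hsumh : Summable (fun m : ℕ => hannEnvelope T ((((m : ℝ) + 1) * g - 2) / T)) :=
      (hsum2.div_const 2).congr (fun m => by ring)
    have hps : Summable (fun q : ℕ × Bool => hannEnvelope T ((((q.1 : ℝ) + 1) * g - 2) / T)) := by
      refine (summable_prod_of_nonneg (fun q => hnn' q.1)).2 ⟨fun a => Summable.of_finite, ?_⟩
      apply hsumh.mul_left 2 |>.congr
      intro m
      rw [tsum_bool]; ring
    calc ∑ l ∈ s, hannEnvelope T (ν - νf l)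
        ≤ ∑ l ∈ s, hannEnvelope T (((((M l - 1 : ℕ):ℝ) + 1) * g - 2) / T) :=
          Finset.sum_le_sum hterm
      _ = ∑ q ∈ s.image (fun l => (M l - 1, decide (νf k < νf l))),
            hannEnvelope T ((((q.1 : ℝ) + 1) * g - 2) / T) := (Finset.sum_image (f := fun q : ℕ × Bool =>
            hannEnvelope T ((((q.1 : ℝ) + 1) * g - 2) / T)) hφinj).symm
      _ ≤ ∑' q : ℕ × Bool, hannEnvelope T ((((q.1 : ℝ) + 1) * g - 2) / T) :=
          Summable.sum_le_tsum _ (fun q _ => hnn' q.1) hps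
      _ = ∑' m : ℕ, ∑' b : Bool, hannEnvelope T ((((m : ℝ) + 1) * g - 2) / T) := Summable.tsum_prod' hps (fun b => Summable.of_finite)
      _ = ∑' m : ℕ, 2 * hannEnvelope T ((((m : ℝ) + 1) * g - 2) / T) :=
          tsum_congr (fun m => by rw [tsum_bool]; ring)
  · -- Part 3
    have hlog : Real.log 2 < 0.6931471808 := Real.log_two_lt_d9
    have hπ3 : (3:ℝ) < Real.pi := Real.pi_gt_three
    have hg3 : (0:ℝ) < g^3 := by positivity
    rw [div_lt_div_iff₀ (by positivity) hg3]
    nlinarith
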